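/- Let μ₁, μ₂ be finitely supported idempotent probability measures on X with representations μ_i(φ) = max_{1≤j≤n_i}(λ_{ij} + φ(x_{ij})) (i = 1, 2). If n₁ ≥ 2 and n₂ ≥ 2 (i.e., each support contains at least two points), then the set Λ(μ₁, μ₂) of couplings of μ₁ and μ₂ has cardinality at least that of the continuum. -/

import Mathlib

open Filter Topology

variable {X : Type*}

/-- An idempotent probability measure on a topological space `X`:
a functional on `C(X, ℝ)` preserving constants, shifting by constants,
and turning pointwise max into max. -/
def IsIPM [TopologicalSpace X] (μ : C(X, ℝ) → ℝ) : Prop :=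
  (∀ c : ℝ, μ (ContinuousMap.const X c) = c) ∧
  (∀ (φ : C(X, ℝ)) (c : ℝ), μ (φ + ContinuousMap.const X c) = μ φ + c) ∧
  (∀ φ ψ : C(X, ℝ), μ (φ ⊔ ψ) = max (μ φ) (μ ψ))

/-- `μ` is represented as `μ(φ) = max_i (λ i + φ (x i))` with `x` pairwise distinct
and `max_i λ i = 0`. -/
def IsRepr [TopologicalSpace X] (μ : C(X, ℝ) → ℝ) {n : ℕ}
    (x : Fin n → X) (lam : Fin n → ℝ) : Prop :=
  0 < n ∧ Function.Injective x ∧ (⨆ i, lam i) = 0 ∧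
    ∀ φ : C(X, ℝ), μ φ = ⨆ i, (lam i + φ (x i))

/-- A finitely supported idempotent probability measure. -/
def IsFinSuppIPM [TopologicalSpace X] (μ : C(X, ℝ) → ℝ) : Prop :=
  ∃ (n : ℕ) (x : Fin n → X) (lam : Fin n → ℝ), IsRepr μ x lam

/-- `ξ` is a coupling of `μ1` and `μ2`: an idempotent probability measure on `X × X`
whose marginals are `μ1` and `μ2`. -/
def IsCoupling [TopologicalSpace X] (μ1 μ2 : C(X, ℝ) → ℝ)
    (ξ : C(X × X, ℝ) → ℝ) : Prop :=
  IsIPM ξ ∧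
  (∀ φ : C(X, ℝ), ξ (φ.comp ContinuousMap.fst) = μ1 φ) ∧
  (∀ φ : C(X, ℝ), ξ (φ.comp ContinuousMap.snd) = μ2 φ)

/-- A coupling matrix for weight vectors `lam1`, `lam2`: entries in `ℝ ∪ {−∞}`,
with row maxima `lam1` and column maxima `lam2`. -/
def IsCouplingMatrix {n1 n2 : ℕ} (lam1 : Fin n1 → ℝ) (lam2 : Fin n2 → ℝ)
    (γ : Fin n1 → Fin n2 → WithBot ℝ) : Prop :=
  (∀ j, (Finset.univ.sup fun k => γ j k) = (lam1 j : WithBot ℝ)) ∧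
  (∀ k, (Finset.univ.sup fun j => γ j k) = (lam2 k : WithBot ℝ))

/-- The cost `max{ |λ_{2k} − λ_{1j}| + ρ(x_{1j}, x_{2k}) : γ_{jk} ≠ −∞ }`. -/
noncomputable def matCost [MetricSpace X] {n1 n2 : ℕ}
    (x1 : Fin n1 → X) (lam1 : Fin n1 → ℝ) (x2 : Fin n2 → X) (lam2 : Fin n2 → ℝ)
    (γ : Fin n1 → Fin n2 → WithBot ℝ) : ℝ :=
  sSup {c : ℝ | ∃ j k, γ j k ≠ ⊥ ∧ c = |lam2 k - lam1 j| + dist (x1 j) (x2 k)}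

/-- `H(μ1, μ2)`: the infimum of costs over all coupling matrices
(for all representations of `μ1`, `μ2`; the representation is unique). -/
noncomputable def Hdist [MetricSpace X] (μ1 μ2 : C(X, ℝ) → ℝ) : ℝ :=
  sInf {c : ℝ | ∃ (n1 n2 : ℕ) (x1 : Fin n1 → X) (lam1 : Fin n1 → ℝ)
      (x2 : Fin n2 → X) (lam2 : Fin n2 → ℝ) (γ : Fin n1 → Fin n2 → WithBot ℝ),
      IsRepr μ1 x1 lam1 ∧ IsRepr μ2 x2 lam2 ∧ IsCouplingMatrix lam1 lam2 γ ∧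
      c = matCost x1 lam1 x2 lam2 γ}

/-- `ρ_ω(μ1, μ2) = min{diam X, H(μ1, μ2)}`. -/
noncomputable def rhoOmega [MetricSpace X] (μ1 μ2 : C(X, ℝ) → ℝ) : ℝ :=
  min (Metric.diam (Set.univ : Set X)) (Hdist μ1 μ2)

/-- if each support has at least two points, the set of couplings
has cardinality at least the continuum. -/
private lemma sup'_add_const {ι : Type*} (s : Finset ι) (h : s.Nonempty) (f : ι → ℝ) (c : ℝ) :
    (s.sup' h fun i => f i + c) = s.sup' h f + c := by
  apply le_antisymm
  · exact Finset.sup'_le _ _ fun i hi => add_le_add_left (Finset.le_sup' f hi) c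
  · have : s.sup' h f ≤ (s.sup' h fun i => f i + c) - c :=
      Finset.sup'_le _ _ fun i hi =>
        le_sub_iff_add_le.mpr (Finset.le_sup' (fun i => f i + c) hi)
    linarith

private lemma sup'_max {ι : Type*} (s : Finset ι) (h : s.Nonempty) (f g : ι → ℝ) :
    (s.sup' h fun i => max (f i) (g i)) = max (s.sup' h f) (s.sup' h g) := by
  apply le_antisymm
  · exact Finset.sup'_le _ _ fun i hi => max_le_max (Finset.le_sup' f hi) (Finset.le_sup' g hi)
  · refine max_le (Finset.sup'_le _ _ fun i hi => ?_) (Finset.sup'_le _ _ fun i hi => ?_)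
    · exact le_trans (le_max_left _ (g i)) (Finset.le_sup' (fun i => max (f i) (g i)) hi)
    · exact le_trans (le_max_right (f i) _) (Finset.le_sup' (fun i => max (f i) (g i)) hi)

private lemma iSup_eq_sup'' {n : ℕ} [NeZero n] (f : Fin n → ℝ) :
    (⨆ i, f i) = Finset.univ.sup' Finset.univ_nonempty f := by
  apply le_antisymm
  · exact ciSup_le fun i => Finset.le_sup' f (Finset.mem_univ i)
  · exact Finset.sup'_le _ _ fun i _ => le_ciSup (Set.finite_range f).bddAbove i

private lemma sup'_prod {m n : ℕ} [NeZero m] [NeZero n] (f : Fin m × Fin n → ℝ) :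
    (Finset.univ.sup' Finset.univ_nonempty f)
      = Finset.univ.sup' Finset.univ_nonempty fun j =>
          Finset.univ.sup' Finset.univ_nonempty fun k => f (j, k) := by
  apply le_antisymm
  · refine Finset.sup'_le _ _ fun p _ => ?_
    obtain ⟨j, k⟩ := p
    exact le_trans (Finset.le_sup' (fun k => f (j, k)) (Finset.mem_univ k))
      (Finset.le_sup' (fun j => Finset.univ.sup' Finset.univ_nonempty fun k => f (j, k))
        (Finset.mem_univ j))
  · exact Finset.sup'_le _ _ fun j _ => Finset.sup'_le _ _ fun k _ =>
      Finset.le_sup' f (Finset.mem_univ (j, k))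

theorem stmt2 [MetricSpace X] [CompactSpace X]
    (μ1 μ2 : C(X, ℝ) → ℝ) {n1 n2 : ℕ}
    (x1 : Fin n1 → X) (lam1 : Fin n1 → ℝ) (x2 : Fin n2 → X) (lam2 : Fin n2 → ℝ)
    (h1 : IsRepr μ1 x1 lam1) (h2 : IsRepr μ2 x2 lam2)
    (hn1 : 2 ≤ n1) (hn2 : 2 ≤ n2) :
    Cardinal.continuum ≤ Cardinal.mk {ξ : C(X × X, ℝ) → ℝ // IsCoupling μ1 μ2 ξ} := by
  classical
  obtain ⟨hn1pos, hx1inj, hl1, hrep1⟩ := h1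
  obtain ⟨hn2pos, hx2inj, hl2, hrep2⟩ := h2
  haveI : NeZero n1 := ⟨by omega⟩
  haveI : NeZero n2 := ⟨by omega⟩
  obtain ⟨j1, hj1⟩ := Finite.exists_max lam1
  obtain ⟨k2, hk2⟩ := Finite.exists_max lam2
  have hl1max : lam1 j1 = 0 := by
    rw [← hl1]
    exact le_antisymm (le_ciSup (Set.finite_range lam1).bddAbove j1) (ciSup_le hj1)
  have hl2max : lam2 k2 = 0 := by
    rw [← hl2]
    exact le_antisymm (le_ciSup (Set.finite_range lam2).bddAbove k2) (ciSup_le hk2)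
  have hneg1 : ∀ j, lam1 j ≤ 0 := fun j => hl1max ▸ hj1 j
  have hneg2 : ∀ k, lam2 k ≤ 0 := fun k => hl2max ▸ hk2 k
  obtain ⟨j0, hj0⟩ := Fintype.exists_ne_of_one_lt_card (by simp; omega) j1
  obtain ⟨k0, hk0⟩ := Fintype.exists_ne_of_one_lt_card (by simp; omega) k2
  set p0 : X × X := (x1 j0, x2 k0) with hp0
  set γ : ℝ → Fin n1 → Fin n2 → ℝ := fun t j k =>
    min (lam1 j) (lam2 k) - (if j = j0 ∧ k = k0 then t else 0) with hγ
  have hne : (Finset.univ : Finset (Fin n1 × Fin n2)).Nonempty := Finset.univ_nonempty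
  set ξ : ℝ → (C(X × X, ℝ) → ℝ) := fun t Φ =>
    Finset.univ.sup' hne fun p : Fin n1 × Fin n2 => γ t p.1 p.2 + Φ (x1 p.1, x2 p.2) with hξ
  have hγle : ∀ t, 0 ≤ t → ∀ j k, γ t j k ≤ min (lam1 j) (lam2 k) := by
    intro t ht j k
    simp only [hγ]
    split_ifs <;> linarith
  have hrow : ∀ t, 0 ≤ t → ∀ j,
      (Finset.univ.sup' Finset.univ_nonempty fun k => γ t j k) = lam1 j := by
    intro t ht j
    apply le_antisymm
    · exact Finset.sup'_le _ _ fun k _ => le_trans (hγle t ht j k) (min_le_left _ _)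
    · have hv : γ t j k2 = lam1 j := by
        simp only [hγ]
        rw [if_neg (fun h => hk0 h.2.symm), hl2max, min_eq_left (hneg1 j), sub_zero]
      calc lam1 j = γ t j k2 := hv.symm
        _ ≤ _ := Finset.le_sup' _ (Finset.mem_univ k2)
  have hcol : ∀ t, 0 ≤ t → ∀ k,
      (Finset.univ.sup' Finset.univ_nonempty fun j => γ t j k) = lam2 k := by
    intro t ht k
    apply le_antisymm
    · exact Finset.sup'_le _ _ fun j _ => le_trans (hγle t ht j k) (min_le_right _ _)
    · have hv : γ t j1 k = lam2 k := by
        simp only [hγ]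
        rw [if_neg (fun h => hj0 h.1.symm), hl1max, min_eq_right (hneg2 k), sub_zero]
      calc lam2 k = γ t j1 k := hv.symm
        _ ≤ _ := Finset.le_sup' (fun j => γ t j k) (Finset.mem_univ j1)
  have hγ0 : ∀ t, 0 ≤ t →
      (Finset.univ.sup' hne fun p : Fin n1 × Fin n2 => γ t p.1 p.2) = 0 := by
    intro t ht
    rw [sup'_prod (fun p : Fin n1 × Fin n2 => γ t p.1 p.2)]
    rw [Finset.sup'_congr Finset.univ_nonempty rfl (fun j _ => hrow t ht j)]
    rw [← iSup_eq_sup'' lam1, hl1]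
  have hcoupling : ∀ t ∈ Set.Icc (0:ℝ) 1, IsCoupling μ1 μ2 (ξ t) := by
    intro t ht
    have ht0 := ht.1
    refine ⟨⟨?_, ?_, ?_⟩, ?_, ?_⟩
    · intro c
      simp only [hξ, ContinuousMap.const_apply]
      rw [sup'_add_const, hγ0 t ht0, zero_add]
    · intro φ c
      simp only [hξ, ContinuousMap.add_apply, ContinuousMap.const_apply, ← add_assoc]
      rw [sup'_add_const]
    · intro φ ψ
      simp only [hξ, ContinuousMap.sup_apply]
      simp only [← max_add_add_left]
      exact sup'_max _ _ _ _
    · intro φ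
      simp only [hξ, ContinuousMap.comp_apply, ContinuousMap.fst_apply]
      rw [hrep1 φ, iSup_eq_sup'']
      rw [sup'_prod (fun p : Fin n1 × Fin n2 => γ t p.1 p.2 + φ (x1 p.1))]
      refine Finset.sup'_congr Finset.univ_nonempty rfl (fun j _ => ?_)
      show (Finset.univ.sup' Finset.univ_nonempty fun k : Fin n2 => γ t j k + φ (x1 j))
        = lam1 j + φ (x1 j)
      rw [sup'_add_const, hrow t ht0 j]
    · intro φ
      simp only [hξ, ContinuousMap.comp_apply, ContinuousMap.snd_apply]
      rw [hrep2 φ, iSup_eq_sup'']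
      rw [sup'_prod (fun p : Fin n1 × Fin n2 => γ t p.1 p.2 + φ (x2 p.2))]
      rw [Finset.sup'_comm]
      refine Finset.sup'_congr Finset.univ_nonempty rfl (fun k _ => ?_)
      show (Finset.univ.sup' Finset.univ_nonempty fun j : Fin n1 => γ t j k + φ (x2 k))
        = lam2 k + φ (x2 k)
      rw [sup'_add_const, hcol t ht0 k]
  -- test function
  set m : ℝ := min (lam1 j0) (lam2 k0) with hm
  have hm0 : m ≤ 0 := le_trans (min_le_left _ _) (hneg1 j0)
  set d : ℝ := Finset.univ.inf' hne (fun p : Fin n1 × Fin n2 =>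
      if p.1 = j0 ∧ p.2 = k0 then 1 else dist (x1 p.1, x2 p.2) p0) with hd
  have hdpos : 0 < d := by
    rw [hd, Finset.lt_inf'_iff]
    intro p _
    split_ifs with h
    · norm_num
    · rw [dist_pos]
      intro hc
      exact h ⟨hx1inj (congrArg Prod.fst hc), hx2inj (congrArg Prod.snd hc)⟩
  have hdle : ∀ p : Fin n1 × Fin n2, ¬(p.1 = j0 ∧ p.2 = k0) →
      d ≤ dist (x1 p.1, x2 p.2) p0 := by
    intro p hp
    have := Finset.inf'_le (fun p : Fin n1 × Fin n2 =>
      if p.1 = j0 ∧ p.2 = k0 then 1 else dist (x1 p.1, x2 p.2) p0) (Finset.mem_univ p)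
    rwa [if_neg hp] at this
  set A : ℝ := (2 - m) / d with hA
  have hApos : 0 < A := div_pos (by linarith) hdpos
  have hAd : A * d = 2 - m := div_mul_cancel₀ _ (ne_of_gt hdpos)
  set Φ : C(X × X, ℝ) := ⟨fun z => max (m - 2) (-A * dist z p0), by fun_prop⟩ with hΦ
  have hΦ0 : Φ p0 = 0 := by
    simp only [hΦ, ContinuousMap.coe_mk, dist_self, mul_zero]
    rw [max_eq_right (by linarith)]
  have hΦother : ∀ z : X × X, d ≤ dist z p0 → Φ z = m - 2 := by
    intro z hz
    simp only [hΦ, ContinuousMap.coe_mk]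
    rw [max_eq_left]
    nlinarith
  have hval : ∀ t ∈ Set.Icc (0:ℝ) 1, ξ t Φ = m - t := by
    intro t ht
    have hj0k0 : γ t j0 k0 = m - t := by simp [hγ, hm]
    apply le_antisymm
    · refine Finset.sup'_le _ _ fun p _ => ?_
      by_cases hp : p.1 = j0 ∧ p.2 = k0
      · obtain ⟨e1, e2⟩ := hp
        rw [e1, e2, hj0k0]
        rw [show ((x1 j0, x2 k0) : X × X) = p0 from hp0.symm, hΦ0, add_zero]
      · have hγle0 : γ t p.1 p.2 ≤ 0 :=
          le_trans (hγle t ht.1 p.1 p.2) (le_trans (min_le_left _ _) (hneg1 _))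
        rw [hΦother _ (hdle p hp)]
        have := ht.2
        linarith
    · calc m - t = γ t j0 k0 + Φ p0 := by rw [hj0k0, hΦ0, add_zero]
        _ ≤ _ := Finset.le_sup'
            (fun p : Fin n1 × Fin n2 => γ t p.1 p.2 + Φ (x1 p.1, x2 p.2))
            (Finset.mem_univ (j0, k0))
  have hinj : Function.Injective (fun t : Set.Icc (0:ℝ) 1 =>
      (⟨ξ t.1, hcoupling t.1 t.2⟩ : {ξ : C(X × X, ℝ) → ℝ // IsCoupling μ1 μ2 ξ})) := by
    intro s t hst
    have h1 : ξ s.1 = ξ t.1 := congrArg Subtype.val hst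
    have h2 := congrFun h1 Φ
    rw [hval s.1 s.2, hval t.1 t.2] at h2
    exact Subtype.ext (by linarith)
  have key := Cardinal.lift_mk_le'.mpr
    ⟨⟨fun t : Set.Icc (0:ℝ) 1 =>
        (⟨ξ t.1, hcoupling t.1 t.2⟩ : {ξ : C(X × X, ℝ) → ℝ // IsCoupling μ1 μ2 ξ}), hinj⟩⟩
  rwa [Cardinal.mk_Icc_real (by norm_num : (0:ℝ) < 1), Cardinal.lift_continuum,
    Cardinal.lift_uzero] at key
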